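/- The kernel g₃(P₁) of the prolonged symbol of the Rapcsák operator has dimension (8n³ − 9n² + 7n)/6; precisely, the subspace of symmetric trilinear forms A : V × V × V → ℝ satisfying A(X, Y, C) = 0 for all X, Y ∈ V and A(X, S, J Y) = A(X, Y, C) for all X, Y ∈ V has dimension (8n³ − 9n² + 7n)/6. -/

import Mathlib

set_option synthInstance.maxHeartbeats 1000000
set_option maxHeartbeats 1000000

noncomputable section

/-- The pointwise model `V = (Fin n → ℝ) × (Fin n → ℝ)` of the double tangent space
`T_x(TM)` for a spray on an `n`-dimensional manifold, in an adapted basis. -/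
abbrev V (n : ℕ) : Type := (Fin n → ℝ) × (Fin n → ℝ)

/-- The vertical endomorphism `J (x, y) = (0, x)`. -/
def Jmap (n : ℕ) : V n →ₗ[ℝ] V n where
  toFun p := (0, p.1)
  map_add' a b := by simp
  map_smul' c a := by simp

/-- The horizontal projector `P_h (x, y) = (x, 0)`. -/
def Ph (n : ℕ) : V n →ₗ[ℝ] V n where
  toFun p := (p.1, 0)
  map_add' a b := by simp
  map_smul' c a := by simp

/-- The `j`-th standard basis vector of `Fin n → ℝ`, indexed by `1 ≤ j ≤ n`
(zero if `j` is out of range). -/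
def dlt (n j : ℕ) : Fin n → ℝ := fun i => if (i : ℕ) + 1 = j then 1 else 0

/-- The horizontal basis vector `h_j`, `1 ≤ j ≤ n`. -/
def hvec (n j : ℕ) : V n := (dlt n j, 0)

/-- The vertical basis vector `v_j`, `1 ≤ j ≤ n`. -/
def vvec (n j : ℕ) : V n := (0, dlt n j)

/-- The spray vector `S = h_n`. -/
def Svec (n : ℕ) : V n := hvec n n

/-- The Liouville vector `C = v_n = J S`. -/
def Cvec (n : ℕ) : V n := vvec n n

/-- Bilinear forms on `V n`. -/
abbrev Bil (n : ℕ) := V n →ₗ[ℝ] V n →ₗ[ℝ] ℝ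

/-- Trilinear forms on `V n` (bundled). -/
abbrev Tri (n : ℕ) := V n →ₗ[ℝ] V n →ₗ[ℝ] V n →ₗ[ℝ] ℝ

/-- Trilinearity of a function `A : V × V × V → ℝ`. -/
def IsTrilin (n : ℕ) (A : V n → V n → V n → ℝ) : Prop :=
  (∀ X X' Y Z, A (X + X') Y Z = A X Y Z + A X' Y Z) ∧
  (∀ (c : ℝ) X Y Z, A (c • X) Y Z = c * A X Y Z) ∧
  (∀ X Y Y' Z, A X (Y + Y') Z = A X Y Z + A X Y' Z) ∧
  (∀ (c : ℝ) X Y Z, A X (c • Y) Z = c * A X Y Z) ∧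
  (∀ X Y Z Z', A X Y (Z + Z') = A X Y Z + A X Y Z') ∧
  (∀ (c : ℝ) X Y Z, A X Y (c • Z) = c * A X Y Z)

theorem IsTrilin.add {n : ℕ} {a b : V n → V n → V n → ℝ}
    (ha : IsTrilin n a) (hb : IsTrilin n b) : IsTrilin n (a + b) := by
  obtain ⟨ha1, ha2, ha3, ha4, ha5, ha6⟩ := ha
  obtain ⟨hb1, hb2, hb3, hb4, hb5, hb6⟩ := hb
  refine ⟨fun X X' Y Z => ?_, fun c X Y Z => ?_, fun X Y Y' Z => ?_,
    fun c X Y Z => ?_, fun X Y Z Z' => ?_, fun c X Y Z => ?_⟩ <;>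
      simp only [Pi.add_apply]
  · linear_combination ha1 X X' Y Z + hb1 X X' Y Z
  · linear_combination ha2 c X Y Z + hb2 c X Y Z
  · linear_combination ha3 X Y Y' Z + hb3 X Y Y' Z
  · linear_combination ha4 c X Y Z + hb4 c X Y Z
  · linear_combination ha5 X Y Z Z' + hb5 X Y Z Z'
  · linear_combination ha6 c X Y Z + hb6 c X Y Z

theorem IsTrilin.smul {n : ℕ} (c : ℝ) {a : V n → V n → V n → ℝ}
    (ha : IsTrilin n a) : IsTrilin n (c • a) := by
  obtain ⟨ha1, ha2, ha3, ha4, ha5, ha6⟩ := ha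
  refine ⟨fun X X' Y Z => ?_, fun d X Y Z => ?_, fun X Y Y' Z => ?_,
    fun d X Y Z => ?_, fun X Y Z Z' => ?_, fun d X Y Z => ?_⟩ <;>
      simp only [Pi.smul_apply, smul_eq_mul]
  · linear_combination c * ha1 X X' Y Z
  · linear_combination c * ha2 d X Y Z
  · linear_combination c * ha3 X Y Y' Z
  · linear_combination c * ha4 d X Y Z
  · linear_combination c * ha5 X Y Z Z'
  · linear_combination c * ha6 d X Y Z

theorem IsTrilin.zero (n : ℕ) : IsTrilin n (0 : V n → V n → V n → ℝ) := by
  refine ⟨fun X X' Y Z => by simp, fun c X Y Z => by simp, fun X Y Y' Z => by simp,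
    fun c X Y Z => by simp, fun X Y Z Z' => by simp, fun c X Y Z => by simp⟩

/-- The kernel `g₃(P₁)` of the prolonged symbol of the Rapcsák operator: symmetric
trilinear forms `A` on `V` with `A(X, Y, C) = 0` and `A(X, S, J Y) = A(X, Y, C)`. -/
def g3P1 (n : ℕ) : Submodule ℝ (V n → V n → V n → ℝ) where
  carrier := {A | IsTrilin n A ∧
    (∀ X Y Z, A X Y Z = A Y X Z) ∧ (∀ X Y Z, A X Y Z = A X Z Y) ∧
    (∀ X Y, A X Y (Cvec n) = 0) ∧
    (∀ X Y, A X (Svec n) (Jmap n Y) = A X Y (Cvec n))}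
  add_mem' := by
    rintro a b ⟨haT, ha1, ha2, ha3, ha4⟩ ⟨hbT, hb1, hb2, hb3, hb4⟩
    refine ⟨haT.add hbT, fun X Y Z => ?_, fun X Y Z => ?_, fun X Y => ?_,
      fun X Y => ?_⟩ <;> simp only [Pi.add_apply]
    · linear_combination ha1 X Y Z + hb1 X Y Z
    · linear_combination ha2 X Y Z + hb2 X Y Z
    · linear_combination ha3 X Y + hb3 X Y
    · linear_combination ha4 X Y + hb4 X Y
  zero_mem' := ⟨IsTrilin.zero n, fun X Y Z => by simp, fun X Y Z => by simp,
    fun X Y => by simp, fun X Y => by simp⟩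
  smul_mem' := by
    rintro c a ⟨haT, ha1, ha2, ha3, ha4⟩
    refine ⟨haT.smul c, fun X Y Z => ?_, fun X Y Z => ?_, fun X Y => ?_,
      fun X Y => ?_⟩ <;> simp only [Pi.smul_apply, smul_eq_mul]
    · linear_combination c * ha1 X Y Z
    · linear_combination c * ha2 X Y Z
    · linear_combination c * ha3 X Y
    · linear_combination c * ha4 X Y


/-! ### Auxiliary development -/

section Counting
open Finset

def sorted3 (s : Finset ℕ) : Finset (ℕ × ℕ × ℕ) :=
  (s ×ˢ s ×ˢ s).filter fun t => t.1 ≤ t.2.1 ∧ t.2.1 ≤ t.2.2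

lemma mem_sorted3 {s : Finset ℕ} {t : ℕ × ℕ × ℕ} :
    t ∈ sorted3 s ↔ (t.1 ∈ s ∧ t.2.1 ∈ s ∧ t.2.2 ∈ s) ∧ t.1 ≤ t.2.1 ∧ t.2.1 ≤ t.2.2 := by
  simp [sorted3, Finset.mem_filter, Finset.mem_product, and_assoc]

lemma card_sorted3 (s : Finset ℕ) : (sorted3 s).card = (s.card + 2).choose 3 := by
  classical
  have hcard : Fintype.card (Sym ↑s 3) = (s.card + 2).choose 3 := by
    rw [Sym.card_sym_eq_choose]
    simp [Fintype.card_coe]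
  have huniv : (Finset.univ : Finset (Sym ↑s 3)).card = Fintype.card (Sym ↑s 3) :=
    Finset.card_univ
  rw [← hcard, ← huniv]
  apply Finset.card_bij
    (fun t ht => (⟨(⟨t.1, (mem_sorted3.mp ht).1.1⟩ ::ₘ ⟨t.2.1, (mem_sorted3.mp ht).1.2.1⟩ ::ₘ
      {⟨t.2.2, (mem_sorted3.mp ht).1.2.2⟩} : Multiset ↑s), by simp⟩ : Sym ↑s 3))
  · intro t ht; exact Finset.mem_univ (α := Sym ↑s 3) _
  · intro t ht t' ht' h
    obtain ⟨⟨h1, h2, h3⟩, h4, h5⟩ := mem_sorted3.mp ht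
    obtain ⟨⟨h1', h2', h3'⟩, h4', h5'⟩ := mem_sorted3.mp ht'
    have := congrArg (fun m : Sym ↑s 3 => Multiset.map Subtype.val m.1) h
    simp only [Multiset.map_cons, Multiset.map_singleton] at this
    have hperm : [t.1, t.2.1, t.2.2].Perm [t'.1, t'.2.1, t'.2.2] := by
      rw [← Multiset.coe_eq_coe]
      simpa [← Multiset.cons_coe] using this
    have hs1 : [t.1, t.2.1, t.2.2].Pairwise (· ≤ ·) := by
      simp [List.pairwise_cons]; omega
    have hs2 : [t'.1, t'.2.1, t'.2.2].Pairwise (· ≤ ·) := by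
      simp [List.pairwise_cons]; omega
    have heq := List.Perm.eq_of_pairwise' hs1 hs2 hperm
    simp only [List.cons.injEq] at heq
    exact Prod.ext heq.1 (Prod.ext heq.2.1 heq.2.2.1)
  · intro m _
    set L := Multiset.sort (Multiset.map Subtype.val m.1) (· ≤ ·) with hL
    have hlen : L.length = 3 := by
      rw [hL]; simp [Multiset.length_sort, m.2]
    have hsorted : L.Pairwise (· ≤ ·) := Multiset.pairwise_sort _ _
    have hLm : (↑L : Multiset ℕ) = Multiset.map Subtype.val m.1 := Multiset.sort_eq _ _
    match L, hlen, hsorted, hLm with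
    | [a, b, c], _, hsorted, hLm =>
      have hmem : ∀ x ∈ [a,b,c], x ∈ s := by
        intro x hx
        have : x ∈ Multiset.map Subtype.val m.1 := by rw [← hLm]; exact_mod_cast hx
        obtain ⟨y, _, rfl⟩ := Multiset.mem_map.mp this
        exact y.2
      have hab : a ≤ b ∧ b ≤ c := by
        simp [List.pairwise_cons] at hsorted; omega
      refine ⟨(a, b, c), mem_sorted3.mpr ⟨⟨hmem a (by simp), hmem b (by simp), hmem c (by simp)⟩,
        hab.1, hab.2⟩, ?_⟩
      apply Subtype.ext
      apply Multiset.map_injective (f := (Subtype.val : ↑s → ℕ)) Subtype.val_injective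
      simp only [Multiset.map_cons, Multiset.map_singleton]
      rw [← hLm]
      simp [← Multiset.cons_coe]

def allowN (n : ℕ) (t : ℕ × ℕ × ℕ) : Prop :=
  (t.1 ≠ 2*n-1 ∧ t.2.1 ≠ 2*n-1 ∧ t.2.2 ≠ 2*n-1) ∧
  ¬((t.1 = n-1 ∨ t.2.1 = n-1 ∨ t.2.2 = n-1) ∧ (n ≤ t.1 ∨ n ≤ t.2.1 ∨ n ≤ t.2.2))

instance (n : ℕ) : DecidablePred (allowN n) := fun t => by unfold allowN; infer_instance

def Tnat (n : ℕ) : Finset (ℕ × ℕ × ℕ) := (sorted3 (range (2*n))).filter (allowN n)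

lemma card_Tnat (n : ℕ) (hn : 1 ≤ n) :
    (Tnat n).card = (n+2).choose 3 + ((2*n).choose 3 - (n+1).choose 3) := by
  classical
  have hsplit := Finset.card_filter_add_card_filter_not
    (s := Tnat n) (p := fun t => t.2.2 < n)
  have hA : (Tnat n).filter (fun t => t.2.2 < n) = sorted3 (range n) := by
    ext t
    simp only [Tnat, Finset.mem_filter, mem_sorted3, mem_range, allowN]
    omega
  have hU : ((range (2*n-1)).erase (n-1)).card = 2*n - 2 := by
    rw [Finset.card_erase_of_mem (by simp; omega), Finset.card_range]
    omega
  have hsub : sorted3 (range (n-1)) ⊆ sorted3 ((range (2*n-1)).erase (n-1)) := by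
    intro t ht
    simp only [mem_sorted3, mem_range, Finset.mem_erase] at *
    omega
  have hB : (Tnat n).filter (fun t => ¬ t.2.2 < n)
      = sorted3 ((range (2*n-1)).erase (n-1)) \ sorted3 (range (n-1)) := by
    ext t
    simp only [Tnat, Finset.mem_filter, Finset.mem_sdiff, mem_sorted3, mem_range,
      Finset.mem_erase, allowN]
    omega
  have hAcard : ((Tnat n).filter (fun t => t.2.2 < n)).card = (n+2).choose 3 := by
    rw [hA, card_sorted3, Finset.card_range]
  have hBcard : ((Tnat n).filter (fun t => ¬ t.2.2 < n)).card
      = (2*n).choose 3 - (n+1).choose 3 := by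
    rw [hB, Finset.card_sdiff_of_subset hsub, card_sorted3, card_sorted3, hU, Finset.card_range]
    congr 2 <;> omega
  omega

lemma card_Tnat_eq (n : ℕ) (hn : 1 ≤ n) :
    (Tnat n).card = (8 * n ^ 3 - 9 * n ^ 2 + 7 * n) / 6 := by
  rw [card_Tnat n hn]
  have c3 : ∀ k : ℕ, 6 * (k+3).choose 3 = (k+1) * ((k+2) * (k+3)) := by
    intro k
    rw [Nat.choose_eq_descFactorial_div_factorial, show Nat.factorial 3 = 6 from rfl,
      Nat.mul_div_cancel' (by simpa [show Nat.factorial 3 = 6 from rfl] using Nat.factorial_dvd_descFactorial (k+3) 3)]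
    simp [Nat.descFactorial]
  match n, hn with
  | 1, _ => decide
  | (l+2), _ =>
    have e1 := c3 (l+1)
    have e2 := c3 (2*l+1)
    have e3 := c3 l
    have hle : (l+3).choose 3 ≤ (2*l+4).choose 3 := Nat.choose_le_choose _ (by omega)
    have key : 8*(l+2)^3 - 9*(l+2)^2 + 7*(l+2)
        = 6 * ((l+2+2).choose 3 + ((2*(l+2)).choose 3 - ((l+2)+1).choose 3)) := by
      have h9 : 9*(l+2)^2 ≤ 8*(l+2)^3 := by nlinarith
      have hle' : ((l+2)+1).choose 3 ≤ (2*(l+2)).choose 3 := by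
        convert hle using 2 <;> omega
      zify [h9, hle']
      have e1' : (6:ℤ) * ((l+2+2).choose 3 : ℤ) = (l+2) * ((l+3) * (l+4)) := by
        exact_mod_cast congrArg (fun x : ℕ => (x:ℤ)) (by convert e1 using 2 <;> omega)
      have e2' : (6:ℤ) * (((2*(l+2)).choose 3 : ℕ) : ℤ) = (2*l+2) * ((2*l+3) * (2*l+4)) := by
        exact_mod_cast congrArg (fun x : ℕ => (x:ℤ)) (by convert e2 using 3 <;> omega)
      have e3' : (6:ℤ) * ((((l+2)+1).choose 3 : ℕ) : ℤ) = (l+1) * ((l+2) * (l+3)) := by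
        exact_mod_cast congrArg (fun x : ℕ => (x:ℤ)) (by convert e3 using 2 <;> omega)
      linear_combination -e1' - e2' + e3'
    rw [key, Nat.mul_div_cancel_left _ (by norm_num)]

end Counting

section SortIdx

abbrev Idx (m : ℕ) := Fin (m+1) ⊕ Fin (m+1)

def idx (m : ℕ) : Idx m → ℕ := Sum.elim (fun i => (i : ℕ)) (fun i => (m+1) + (i : ℕ))

lemma idx_injective (m : ℕ) : Function.Injective (idx m) := by
  rintro (a | a) (b | b) h <;> simp [idx, Fin.ext_iff] at h ⊢ <;> omega

lemma eq_iff_idx {m : ℕ} {x y : Idx m} : x = y ↔ idx m x = idx m y :=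
  ⟨fun h => h ▸ rfl, fun h => idx_injective m h⟩

def sort3 (m : ℕ) (t : Idx m × Idx m × Idx m) : Idx m × Idx m × Idx m :=
  if idx m t.1 ≤ idx m t.2.1 then
    if idx m t.2.1 ≤ idx m t.2.2 then (t.1, t.2.1, t.2.2)
    else if idx m t.1 ≤ idx m t.2.2 then (t.1, t.2.2, t.2.1) else (t.2.2, t.1, t.2.1)
  else
    if idx m t.1 ≤ idx m t.2.2 then (t.2.1, t.1, t.2.2)
    else if idx m t.2.1 ≤ idx m t.2.2 then (t.2.1, t.2.2, t.1) else (t.2.2, t.2.1, t.1)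

lemma sort3_swap12 {m : ℕ} (a b c : Idx m) : sort3 m (a, b, c) = sort3 m (b, a, c) := by
  unfold sort3
  split_ifs <;> dsimp only at * <;>
    first
    | rfl
    | omega
    | (simp only [Prod.mk.injEq, eq_iff_idx, and_true, true_and]; omega)
    | (constructor <;> omega)

lemma sort3_swap23 {m : ℕ} (a b c : Idx m) : sort3 m (a, b, c) = sort3 m (a, c, b) := by
  unfold sort3
  split_ifs <;> dsimp only at * <;>
    first
    | rfl
    | omega
    | (simp only [Prod.mk.injEq, eq_iff_idx, and_true, true_and]; omega)
    | (constructor <;> omega)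

lemma sort3_sorted {m : ℕ} (t : Idx m × Idx m × Idx m) :
    idx m (sort3 m t).1 ≤ idx m (sort3 m t).2.1 ∧
      idx m (sort3 m t).2.1 ≤ idx m (sort3 m t).2.2 := by
  obtain ⟨a, b, c⟩ := t
  unfold sort3
  split_ifs <;> dsimp only at * <;>
    first
    | rfl
    | omega
    | (simp only [Prod.mk.injEq, eq_iff_idx, and_true, true_and]; omega)
    | (constructor <;> omega)

lemma sort3_of_sorted {m : ℕ} {t : Idx m × Idx m × Idx m}
    (h1 : idx m t.1 ≤ idx m t.2.1) (h2 : idx m t.2.1 ≤ idx m t.2.2) : sort3 m t = t := by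
  obtain ⟨a, b, c⟩ := t
  unfold sort3
  simp only at h1 h2
  split_ifs <;> dsimp only at * <;>
    first
    | rfl
    | omega
    | (simp only [Prod.mk.injEq, eq_iff_idx, and_true, true_and]; omega)
    | (constructor <;> omega)

lemma sort3_eval {m : ℕ} {α : Sort*} (f : Idx m → Idx m → Idx m → α)
    (h12 : ∀ a b c, f a b c = f b a c) (h23 : ∀ a b c, f a b c = f a c b)
    (t : Idx m × Idx m × Idx m) :
    f (sort3 m t).1 (sort3 m t).2.1 (sort3 m t).2.2 = f t.1 t.2.1 t.2.2 := by
  obtain ⟨a, b, c⟩ := t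
  unfold sort3
  split_ifs <;> dsimp only at * <;>
    first
    | rfl
    | exact (h12 a b c).symm
    | exact (h23 a b c).symm
    | exact ((h23 a b c).trans (h12 a c b)).symm
    | exact ((h12 a b c).trans (h23 b a c)).symm
    | exact (((h12 a b c).trans (h23 b a c)).trans (h12 b c a)).symm

end SortIdx

section AllowedSet

def ssv (m : ℕ) : Idx m := Sum.inl (Fin.last m)
def bbv (m : ℕ) : Idx m := Sum.inr (Fin.last m)

def allowed (m : ℕ) (t : Idx m × Idx m × Idx m) : Prop :=
  (t.1 ≠ bbv m ∧ t.2.1 ≠ bbv m ∧ t.2.2 ≠ bbv m) ∧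
  ¬((t.1 = ssv m ∨ t.2.1 = ssv m ∨ t.2.2 = ssv m) ∧
    (t.1.isRight = true ∨ t.2.1.isRight = true ∨ t.2.2.isRight = true))

instance (m : ℕ) : DecidablePred (allowed m) := fun t => by unfold allowed; infer_instance

lemma allowed_swap12 {m : ℕ} (a b c : Idx m) :
    allowed m (a, b, c) = allowed m (b, a, c) := by
  unfold allowed; dsimp only; apply propext; tauto

lemma allowed_swap23 {m : ℕ} (a b c : Idx m) :
    allowed m (a, b, c) = allowed m (a, c, b) := by
  unfold allowed; dsimp only; apply propext; tauto

lemma allowed_sort3 {m : ℕ} (t : Idx m × Idx m × Idx m) :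
    allowed m (sort3 m t) = allowed m t := by
  have h := sort3_eval (m := m) (f := fun a b c => allowed m (a, b, c))
    (fun a b c => allowed_swap12 a b c) (fun a b c => allowed_swap23 a b c) t
  simpa using h

def Tset (m : ℕ) : Finset (Idx m × Idx m × Idx m) :=
  Finset.univ.filter fun t =>
    idx m t.1 ≤ idx m t.2.1 ∧ idx m t.2.1 ≤ idx m t.2.2 ∧ allowed m t

lemma idx_lt {m : ℕ} (x : Idx m) : idx m x < 2*(m+1) := by
  rcases x with a | a <;> simp [idx] <;> omega

lemma idx_eq_bb {m : ℕ} {x : Idx m} : idx m x = 2*(m+1)-1 ↔ x = bbv m := by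
  rcases x with a | a <;> simp [idx, bbv, Fin.ext_iff, Fin.last] <;> omega

lemma idx_eq_ss {m : ℕ} {x : Idx m} : idx m x = (m+1)-1 ↔ x = ssv m := by
  rcases x with a | a <;> simp [idx, ssv, Fin.ext_iff, Fin.last] <;> omega

lemma idx_ge {m : ℕ} {x : Idx m} : (m+1) ≤ idx m x ↔ x.isRight = true := by
  rcases x with a | a <;> simp [idx] <;> omega

def toIdx (m : ℕ) (a : ℕ) : Idx m :=
  if h : a < m+1 then Sum.inl ⟨a, h⟩ else Sum.inr ⟨min (a-(m+1)) m, by omega⟩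

lemma idx_toIdx {m a : ℕ} (h : a < 2*(m+1)) : idx m (toIdx m a) = a := by
  unfold toIdx idx
  split_ifs <;> simp <;> omega

lemma card_Tset (m : ℕ) : (Tset m).card = (Tnat (m+1)).card := by
  classical
  apply Finset.card_bij (fun t _ => (idx m t.1, idx m t.2.1, idx m t.2.2))
  · intro t ht
    simp only [Tset, Finset.mem_filter, Finset.mem_univ, true_and] at ht
    simp only [allowed, ← idx_eq_bb, ← idx_eq_ss, ← idx_ge, Ne] at ht
    simp only [Tnat, Finset.mem_filter, mem_sorted3, Finset.mem_range, allowN]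
    have l1 := idx_lt t.1
    have l2 := idx_lt t.2.1
    have l3 := idx_lt t.2.2
    omega
  · intro t ht t' ht' h
    simp only [Prod.mk.injEq] at h
    exact Prod.ext (idx_injective m h.1)
      (Prod.ext (idx_injective m h.2.1) (idx_injective m h.2.2))
  · intro u hu
    simp only [Tnat, Finset.mem_filter, mem_sorted3, Finset.mem_range, allowN] at hu
    obtain ⟨⟨⟨b1, b2, b3⟩, s1, s2⟩, hal⟩ := hu
    have i1 := idx_toIdx (m := m) (a := u.1) (by omega)
    have i2 := idx_toIdx (m := m) (a := u.2.1) (by omega)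
    have i3 := idx_toIdx (m := m) (a := u.2.2) (by omega)
    refine ⟨(toIdx m u.1, toIdx m u.2.1, toIdx m u.2.2), ?_, ?_⟩
    · simp only [Tset, Finset.mem_filter, Finset.mem_univ, true_and]
      simp only [allowed, ← idx_eq_bb, ← idx_eq_ss, ← idx_ge, Ne]
      rw [i1, i2, i3]
      omega
    · dsimp only
      rw [i1, i2, i3]

end AllowedSet

section LinearAlgebraPart

noncomputable def Bas (m : ℕ) : Module.Basis (Idx m) ℝ (V (m+1)) :=
  (Pi.basisFun ℝ (Fin (m+1))).prod (Pi.basisFun ℝ (Fin (m+1)))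

lemma Bas_inl (m : ℕ) (i : Fin (m+1)) : Bas m (.inl i) = (Pi.single i 1, 0) := by
  simp [Bas, Module.Basis.prod_apply]

lemma Bas_inr (m : ℕ) (i : Fin (m+1)) : Bas m (.inr i) = (0, Pi.single i 1) := by
  simp [Bas, Module.Basis.prod_apply]

lemma dlt_last (m : ℕ) : dlt (m+1) (m+1) = Pi.single (Fin.last m) 1 := by
  ext i
  have h : ((i : ℕ) + 1 = m + 1) ↔ (i = Fin.last m) := by
    rw [Fin.ext_iff]; simp only [Fin.val_last]; omega
  simp [dlt, Pi.single_apply, h, Fin.ext_iff]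

lemma Svec_eq (m : ℕ) : Svec (m+1) = Bas m (ssv m) := by
  rw [ssv, Bas_inl]
  unfold Svec hvec
  rw [dlt_last]

lemma Cvec_eq (m : ℕ) : Cvec (m+1) = Bas m (bbv m) := by
  rw [bbv, Bas_inr]
  unfold Cvec vvec
  rw [dlt_last]

lemma J_Bas_inl (m : ℕ) (i : Fin (m+1)) :
    Jmap (m+1) (Bas m (.inl i)) = Bas m (.inr i) := by
  rw [Bas_inl, Bas_inr]; rfl

lemma J_Bas_inr (m : ℕ) (i : Fin (m+1)) : Jmap (m+1) (Bas m (.inr i)) = 0 := by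
  rw [Bas_inr]; rfl

/-- Bundle an unbundled trilinear map. -/
def IsTrilin.bundle {n : ℕ} {a : V n → V n → V n → ℝ} (ha : IsTrilin n a) : Tri n where
  toFun X :=
    { toFun := fun Y =>
        { toFun := fun Z => a X Y Z
          map_add' := fun Z Z' => ha.2.2.2.2.1 X Y Z Z'
          map_smul' := fun c Z => by simpa using ha.2.2.2.2.2 c X Y Z }
      map_add' := fun Y Y' => LinearMap.ext fun Z => ha.2.2.1 X Y Y' Z
      map_smul' := fun c Y => LinearMap.ext fun Z => by simpa using ha.2.2.2.1 c X Y Z }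
  map_add' X X' := LinearMap.ext fun Y => LinearMap.ext fun Z => ha.1 X X' Y Z
  map_smul' c X := LinearMap.ext fun Y => LinearMap.ext fun Z => by simpa using ha.2.1 c X Y Z

@[simp] lemma IsTrilin.bundle_apply {n : ℕ} {a : V n → V n → V n → ℝ} (ha : IsTrilin n a)
    (X Y Z : V n) : ha.bundle X Y Z = a X Y Z := rfl

lemma tri_ext (m : ℕ) (A A' : Tri (m+1))
    (h : ∀ i j k, A (Bas m i) (Bas m j) (Bas m k) = A' (Bas m i) (Bas m j) (Bas m k)) :
    A = A' :=
  (Bas m).ext fun i => (Bas m).ext fun j => (Bas m).ext fun k => h i j k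

lemma sym12 (m : ℕ) (A : Tri (m+1))
    (h : ∀ i j k, A (Bas m i) (Bas m j) (Bas m k) = A (Bas m j) (Bas m i) (Bas m k))
    (X Y Z : V (m+1)) : A X Y Z = A Y X Z := by
  have hAB : A = A.flip := tri_ext m _ _ (fun i j k => by
    rw [LinearMap.flip_apply]; exact h i j k)
  conv_lhs => rw [hAB]
  rfl

lemma sym23 (m : ℕ) (A : Tri (m+1))
    (h : ∀ i j k, A (Bas m i) (Bas m j) (Bas m k) = A (Bas m i) (Bas m k) (Bas m j))
    (X Y Z : V (m+1)) : A X Y Z = A X Z Y := by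
  have hAB : A = LinearMap.lflip.toLinearMap ∘ₗ A := tri_ext m _ _ (fun i j k => by
    simp only [LinearMap.comp_apply, LinearEquiv.coe_coe, LinearMap.lflip_apply, LinearMap.flip_apply]; exact h i j k)
  conv_lhs => rw [hAB]
  rfl

lemma zero2_of_basis (m : ℕ) (A : Tri (m+1)) (Z : V (m+1))
    (h : ∀ i j, A (Bas m i) (Bas m j) Z = 0) (X Y : V (m+1)) : A X Y Z = 0 := by
  rw [← (Bas m).sum_repr X, ← (Bas m).sum_repr Y]
  simp [-Module.Basis.sum_repr, map_sum, map_smul, LinearMap.sum_apply, LinearMap.smul_apply, h]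

lemma zeroJS_of_basis (m : ℕ) (A : Tri (m+1))
    (h : ∀ i j, A (Bas m i) (Svec (m+1)) (Jmap (m+1) (Bas m j)) = 0) (X Y : V (m+1)) :
    A X (Svec (m+1)) (Jmap (m+1) Y) = 0 := by
  rw [← (Bas m).sum_repr X, ← (Bas m).sum_repr Y]
  simp [-Module.Basis.sum_repr, map_sum, map_smul, LinearMap.sum_apply, LinearMap.smul_apply, h]

/-- The coefficient model of `g3P1`. -/
def Wsub (m : ℕ) : Submodule ℝ (Idx m → Idx m → Idx m → ℝ) where
  carrier := {w | (∀ i j k, w i j k = w j i k) ∧ (∀ i j k, w i j k = w i k j) ∧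
    (∀ i j, w i j (bbv m) = 0) ∧ (∀ i k, w i (ssv m) (Sum.inr k) = 0)}
  add_mem' := by
    rintro a b ⟨a1, a2, a3, a4⟩ ⟨b1, b2, b3, b4⟩
    refine ⟨fun i j k => ?_, fun i j k => ?_, fun i j => ?_, fun i k => ?_⟩ <;>
      simp only [Pi.add_apply]
    · rw [a1 i j k, b1 i j k]
    · rw [a2 i j k, b2 i j k]
    · rw [a3 i j, b3 i j, add_zero]
    · rw [a4 i k, b4 i k, add_zero]
  zero_mem' := ⟨fun i j k => rfl, fun i j k => rfl, fun i j => rfl, fun i k => rfl⟩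
  smul_mem' := by
    rintro c a ⟨a1, a2, a3, a4⟩
    refine ⟨fun i j k => ?_, fun i j k => ?_, fun i j => ?_, fun i k => ?_⟩ <;>
      simp only [Pi.smul_apply, smul_eq_mul]
    · rw [a1 i j k]
    · rw [a2 i j k]
    · rw [a3 i j, mul_zero]
    · rw [a4 i k, mul_zero]

lemma w_zero_of_not_allowed {m : ℕ} {w : Idx m → Idx m → Idx m → ℝ}
    (hw : w ∈ Wsub m) {i j k : Idx m} (h : ¬ allowed m (i, j, k)) : w i j k = 0 := by
  obtain ⟨h12, h23, hbb, hss⟩ := hw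
  by_cases hb : i = bbv m ∨ j = bbv m ∨ k = bbv m
  · rcases hb with rfl | rfl | rfl
    · rw [h12, h23]; exact hbb _ _
    · rw [h23]; exact hbb _ _
    · exact hbb _ _
  · push_neg at hb
    have hC2 : (i = ssv m ∨ j = ssv m ∨ k = ssv m) ∧
        (i.isRight = true ∨ j.isRight = true ∨ k.isRight = true) := by
      by_contra hC
      exact h ⟨⟨hb.1, hb.2.1, hb.2.2⟩, hC⟩
    obtain ⟨hs, hr⟩ := hC2
    rcases hs with rfl | rfl | rfl <;> rcases hr with hr | hr | hr
    · simp [ssv] at hr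
    · obtain ⟨r, rfl⟩ := Sum.isRight_iff.mp hr
      rw [h23, h12]; exact hss _ _
    · obtain ⟨r, rfl⟩ := Sum.isRight_iff.mp hr
      rw [h12]; exact hss _ _
    · obtain ⟨r, rfl⟩ := Sum.isRight_iff.mp hr
      rw [h23, h12, h23]; exact hss _ _
    · simp [ssv] at hr
    · obtain ⟨r, rfl⟩ := Sum.isRight_iff.mp hr
      exact hss _ _
    · obtain ⟨r, rfl⟩ := Sum.isRight_iff.mp hr
      rw [h12, h23]; exact hss _ _
    · obtain ⟨r, rfl⟩ := Sum.isRight_iff.mp hr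
      rw [h23]; exact hss _ _
    · simp [ssv] at hr

lemma mem_Tset_sort3 {m : ℕ} {t : Idx m × Idx m × Idx m} (h : allowed m t) :
    sort3 m t ∈ Tset m := by
  simp only [Tset, Finset.mem_filter, Finset.mem_univ, true_and]
  exact ⟨(sort3_sorted t).1, (sort3_sorted t).2, by rw [allowed_sort3]; exact h⟩

noncomputable def Fg (m : ℕ) (g : ↥(Tset m) → ℝ) (i j k : Idx m) : ℝ :=
  if h : allowed m (i, j, k) then g ⟨sort3 m (i, j, k), mem_Tset_sort3 h⟩ else 0

lemma Fg_pos {m : ℕ} (g : ↥(Tset m) → ℝ) {i j k : Idx m} (h : allowed m (i, j, k)) :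
    Fg m g i j k = g ⟨sort3 m (i, j, k), mem_Tset_sort3 h⟩ := dif_pos h

lemma Fg_neg {m : ℕ} (g : ↥(Tset m) → ℝ) {i j k : Idx m} (h : ¬ allowed m (i, j, k)) :
    Fg m g i j k = 0 := dif_neg h

lemma Fg_mem_Wsub {m : ℕ} (g : ↥(Tset m) → ℝ) : (fun i j k => Fg m g i j k) ∈ Wsub m := by
  refine ⟨fun i j k => ?_, fun i j k => ?_, fun i j => ?_, fun i k => ?_⟩ <;> dsimp only
  · by_cases h : allowed m (i, j, k)
    · rw [Fg_pos g h, Fg_pos g ((allowed_swap12 i j k) ▸ h)]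
      exact congrArg g (Subtype.ext (sort3_swap12 i j k))
    · rw [Fg_neg g h, Fg_neg g (fun h' => h ((allowed_swap12 i j k) ▸ h'))]
  · by_cases h : allowed m (i, j, k)
    · rw [Fg_pos g h, Fg_pos g ((allowed_swap23 i j k) ▸ h)]
      exact congrArg g (Subtype.ext (sort3_swap23 i j k))
    · rw [Fg_neg g h, Fg_neg g (fun h' => h ((allowed_swap23 i j k) ▸ h'))]
  · exact Fg_neg g (fun hA => hA.1.2.2 rfl)
  · exact Fg_neg g (fun hA => hA.2 ⟨Or.inr (Or.inl rfl), Or.inr (Or.inr rfl)⟩)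

/-- `Wsub m` is linearly equivalent to functions on `Tset m`. -/
noncomputable def E2 (m : ℕ) : Wsub m ≃ₗ[ℝ] (↥(Tset m) → ℝ) where
  toFun w t := w.1 t.1.1 t.1.2.1 t.1.2.2
  map_add' w w' := rfl
  map_smul' c w := rfl
  invFun g := ⟨fun i j k => Fg m g i j k, Fg_mem_Wsub g⟩
  left_inv w := by
    apply Subtype.ext
    funext i j k
    show Fg m (fun t => w.1 t.1.1 t.1.2.1 t.1.2.2) i j k = w.1 i j k
    by_cases h : allowed m (i, j, k)
    · rw [Fg_pos _ h]
      exact sort3_eval w.1 (fun a b c => w.2.1 a b c) (fun a b c => w.2.2.1 a b c) (i, j, k)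
    · rw [Fg_neg _ h]
      exact (w_zero_of_not_allowed w.2 h).symm
  right_inv g := by
    funext t
    obtain ⟨ht1, ht2, ht3⟩ : idx m t.1.1 ≤ idx m t.1.2.1 ∧ idx m t.1.2.1 ≤ idx m t.1.2.2 ∧
        allowed m t.1 := by
      have := t.2
      simpa only [Tset, Finset.mem_filter, Finset.mem_univ, true_and] using this
    show Fg m g t.1.1 t.1.2.1 t.1.2.2 = g t
    have hal : allowed m (t.1.1, t.1.2.1, t.1.2.2) := by
      have heq : (t.1.1, t.1.2.1, t.1.2.2) = t.1 := rfl
      rw [heq]; exact ht3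
    rw [Fg_pos _ hal]
    apply congrArg g
    apply Subtype.ext
    have hst : sort3 m (t.1.1, t.1.2.1, t.1.2.2) = (t.1.1, t.1.2.1, t.1.2.2) :=
      sort3_of_sorted ht1 ht2
    simpa using hst

noncomputable def Tw (m : ℕ) (w : Idx m → Idx m → Idx m → ℝ) : Tri (m+1) :=
  (Bas m).constr ℝ fun i => (Bas m).constr ℝ fun j => (Bas m).constr ℝ fun k => w i j k

lemma Tw_basis (m : ℕ) (w : Idx m → Idx m → Idx m → ℝ) (i j k : Idx m) :
    Tw m w (Bas m i) (Bas m j) (Bas m k) = w i j k := by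
  simp [Tw, Module.Basis.constr_basis]

lemma Tw_mem_g3P1 {m : ℕ} (w : Idx m → Idx m → Idx m → ℝ) (hw : w ∈ Wsub m) :
    (fun X Y Z => Tw m w X Y Z) ∈ g3P1 (m+1) := by
  obtain ⟨h12, h23, hbb, hss⟩ := hw
  have hzC : ∀ X Y, Tw m w X Y (Cvec (m+1)) = 0 := by
    intro X Y
    refine zero2_of_basis m (Tw m w) (Cvec (m+1)) (fun i j => ?_) X Y
    rw [Cvec_eq, Tw_basis]
    exact hbb i j
  have hzJS : ∀ X Y, Tw m w X (Svec (m+1)) (Jmap (m+1) Y) = 0 := by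
    intro X Y
    refine zeroJS_of_basis m (Tw m w) (fun i j => ?_) X Y
    rcases j with k | k
    · rw [Svec_eq, J_Bas_inl, Tw_basis]
      exact hss i k
    · rw [J_Bas_inr]
      simp
  refine ⟨⟨fun X X' Y Z => by simp, fun c X Y Z => by simp,
      fun X Y Y' Z => by simp, fun c X Y Z => by simp,
      fun X Y Z Z' => by simp, fun c X Y Z => by simp⟩,
    fun X Y Z => sym12 m (Tw m w) (fun i j k => by rw [Tw_basis, Tw_basis]; exact h12 i j k) X Y Z,
    fun X Y Z => sym23 m (Tw m w) (fun i j k => by rw [Tw_basis, Tw_basis]; exact h23 i j k) X Y Z,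
    fun X Y => hzC X Y,
    fun X Y => (hzJS X Y).trans (hzC X Y).symm⟩

lemma basisvals_mem_Wsub {m : ℕ} (A : V (m+1) → V (m+1) → V (m+1) → ℝ)
    (hA : A ∈ g3P1 (m+1)) :
    (fun i j k => A (Bas m i) (Bas m j) (Bas m k)) ∈ Wsub m := by
  obtain ⟨hT, h1, h2, h3, h4⟩ := hA
  refine ⟨fun i j k => h1 _ _ _, fun i j k => h2 _ _ _, fun i j => ?_, fun i k => ?_⟩
  · show A (Bas m i) (Bas m j) (Bas m (bbv m)) = 0
    rw [← Cvec_eq]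
    exact h3 _ _
  · show A (Bas m i) (Bas m (ssv m)) (Bas m (Sum.inr k)) = 0
    rw [← Svec_eq, ← J_Bas_inl]
    rw [h4]
    exact h3 _ _

/-- `g3P1 (m+1)` is linearly equivalent to `Wsub m`. -/
noncomputable def E1 (m : ℕ) : ↥(g3P1 (m+1)) ≃ₗ[ℝ] ↥(Wsub m) where
  toFun A := ⟨fun i j k => A.1 (Bas m i) (Bas m j) (Bas m k), basisvals_mem_Wsub A.1 A.2⟩
  map_add' A A' := rfl
  map_smul' c A := rfl
  invFun w := ⟨fun X Y Z => Tw m w.1 X Y Z, Tw_mem_g3P1 w.1 w.2⟩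
  left_inv A := by
    apply Subtype.ext
    have hT : IsTrilin (m+1) A.1 := A.2.1
    have hb : Tw m (fun i j k => A.1 (Bas m i) (Bas m j) (Bas m k)) = hT.bundle :=
      tri_ext m _ _ (fun i j k => by rw [Tw_basis]; rfl)
    funext X Y Z
    show Tw m _ X Y Z = A.1 X Y Z
    rw [hb]
    rfl
  right_inv w := by
    apply Subtype.ext
    funext i j k
    exact Tw_basis m w.1 i j k

end LinearAlgebraPart


/-- the kernel `g₃(P₁)` of the prolonged symbol of the Rapcsák operator
has dimension `(8n³ − 9n² + 7n)/6`. -/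
theorem dim_g3P1 (n : ℕ) (hn : 1 ≤ n) :
    Module.finrank ℝ (g3P1 n) = (8 * n ^ 3 - 9 * n ^ 2 + 7 * n) / 6 := by
  obtain ⟨m, rfl⟩ : ∃ m, n = m + 1 := ⟨n - 1, by omega⟩
  rw [(E1 m).finrank_eq, (E2 m).finrank_eq, Module.finrank_fintype_fun_eq_card,
    Fintype.card_coe, card_Tset, card_Tnat_eq (m+1) (by omega)]
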